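/- Let ι be a type, let ℓ : ι → ℝ be a family of reals with ℓ i ≥ c for all i, for some constant c > 0, let s > 0 be real, and suppose the family i ↦ exp(−s·ℓ i) is summable. Then the double family (i,m) ∈ ι × ℕ≥1 ↦ (1/m)·(e^{s m ℓ_i} − e^{(s−1) m ℓ_i})⁻¹ is summable, and ∑_{i} ∑_{m=1}^∞ (1/m) · 1/(e^{s m ℓ_i} − e^{(s−1) m ℓ_i}) = −log ∏_{i} ∏_{k=0}^∞ (1 − e^{−(s+k)ℓ_i}). -/

import Mathlib

open Real

set_option maxHeartbeats 1000000 in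
/-- The analytic core of Theorem 1.1: summability of the double family and the identity
`∑_i ∑_{m ≥ 1} (1/m)/(e^{s m ℓ_i} - e^{(s-1) m ℓ_i}) = -log ∏_i ∏_k (1 - e^{-(s+k) ℓ_i})`. -/
theorem stmt2 {ι : Type*} (ℓ : ι → ℝ) (c : ℝ) (hc : 0 < c) (hℓ : ∀ i, c ≤ ℓ i)
    (s : ℝ) (hs : 0 < s) (hsum : Summable fun i => Real.exp (-s * ℓ i)) :
    Summable (fun p : ι × ℕ+ =>
      (1 / (p.2 : ℝ)) * (Real.exp (s * p.2 * ℓ p.1) - Real.exp ((s - 1) * p.2 * ℓ p.1))⁻¹) ∧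
    (∑' i, ∑' m : ℕ+,
        (1 / (m : ℝ)) * (Real.exp (s * m * ℓ i) - Real.exp ((s - 1) * m * ℓ i))⁻¹) =
      -Real.log (∏' i, ∏' k : ℕ, (1 - Real.exp (-(s + k) * ℓ i))) := by
  have hℓpos : ∀ i, 0 < ℓ i := fun i => hc.trans_le (hℓ i)
  -- the triple family
  set a : ι × ℕ+ × ℕ → ℝ :=
    fun p => (1 / (p.2.1 : ℝ)) * Real.exp (-(s + p.2.2) * p.2.1 * ℓ p.1) with ha_def
  have ha_nonneg : ∀ p, 0 ≤ a p := by
    intro p; have : (0:ℝ) < p.2.1 := by exact_mod_cast p.2.1.pos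
    positivity
  -- summability of the triple family
  have ha : Summable a := by
    have h2 : Summable (fun m : ℕ+ => Real.exp (-(s*c)) ^ m.natPred) :=
      (summable_geometric_of_lt_one (Real.exp_nonneg _)
        (Real.exp_lt_one_iff.mpr (by nlinarith))).comp_injective PNat.natPred_injective
    have h3 : Summable (fun k : ℕ => Real.exp (-c) ^ k) :=
      summable_geometric_of_lt_one (Real.exp_nonneg _)
        (Real.exp_lt_one_iff.mpr (by linarith))
    have h23 : Summable (fun q : ℕ+ × ℕ =>
        Real.exp (-(s*c)) ^ q.1.natPred * Real.exp (-c) ^ q.2) := by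
      exact h2.mul_of_nonneg h3 (fun m => by positivity) (fun k => by positivity)
    have hbound : Summable (fun p : ι × ℕ+ × ℕ =>
        Real.exp (-s * ℓ p.1) * (Real.exp (-(s*c)) ^ p.2.1.natPred * Real.exp (-c) ^ p.2.2)) :=
      hsum.mul_of_nonneg h23 (fun i => by positivity) (fun q => by positivity)
    refine Summable.of_nonneg_of_le ha_nonneg (fun p => ?_) hbound
    obtain ⟨i, m, k⟩ := p
    have hm1 : (1:ℝ) ≤ (m:ℝ) := by exact_mod_cast m.one_le
    have hknn : (0:ℝ) ≤ (k:ℕ) := Nat.cast_nonneg k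
    have hnat : ((m.natPred : ℕ) : ℝ) = (m:ℝ) - 1 := by
      have h := m.natPred_add_one
      have h2 : ((m.natPred : ℕ) : ℝ) + 1 = ((m : ℕ) : ℝ) := by exact_mod_cast h
      have h3 : ((m : ℕ) : ℝ) = (m : ℝ) := rfl
      linarith [h3 ▸ h2]
    have hexp : Real.exp (-(s + k) * m * ℓ i) ≤
        Real.exp (-s * ℓ i) * (Real.exp (-(s*c)) ^ m.natPred * Real.exp (-c) ^ k) := by
      rw [← Real.exp_nat_mul, ← Real.exp_nat_mul, ← Real.exp_add, ← Real.exp_add,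
        Real.exp_le_exp, hnat]
      have h1 : s * ((m:ℝ) - 1) * c ≤ s * ((m:ℝ) - 1) * ℓ i :=
        mul_le_mul_of_nonneg_left (hℓ i) (mul_nonneg hs.le (by linarith))
      have hcm : c ≤ (m:ℝ) * ℓ i := by
        nlinarith [hℓ i, mul_nonneg (by linarith : (0:ℝ) ≤ (m:ℝ) - 1) (hℓpos i).le]
      have h2 : (k:ℝ) * c ≤ (k:ℝ) * ((m:ℝ) * ℓ i) :=
        mul_le_mul_of_nonneg_left hcm hknn
      nlinarith [h1, h2]
    calc a (i, m, k) = (1 / (m:ℝ)) * Real.exp (-(s + k) * m * ℓ i) := rfl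
      _ ≤ 1 * Real.exp (-(s + k) * m * ℓ i) := by
          apply mul_le_mul_of_nonneg_right _ (Real.exp_nonneg _)
          rw [div_le_one (by linarith)]
          exact hm1
      _ = Real.exp (-(s + k) * m * ℓ i) := one_mul _
      _ ≤ _ := hexp
  -- inner geometric sum over k
  have hB : ∀ i (m : ℕ+), HasSum (fun k : ℕ => a (i, m, k))
      ((1 / (m:ℝ)) * (Real.exp (s * m * ℓ i) - Real.exp ((s - 1) * m * ℓ i))⁻¹) := by
    intro i m
    have hmpos : (0:ℝ) < (m:ℝ) := by exact_mod_cast m.pos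
    have hmlpos : 0 < (m:ℝ) * ℓ i := mul_pos hmpos (hℓpos i)
    have hr : Real.exp (-((m:ℝ) * ℓ i)) < 1 := Real.exp_lt_one_iff.mpr (by linarith)
    have geom := (hasSum_geometric_of_lt_one (Real.exp_nonneg _) hr).mul_left
      ((1 / (m:ℝ)) * Real.exp (-(s * m * ℓ i)))
    have h1 : (fun k : ℕ => (1 / (m:ℝ)) * Real.exp (-(s * m * ℓ i))
        * Real.exp (-((m:ℝ) * ℓ i)) ^ k) = fun k => a (i, m, k) := by
      funext k
      show _ = (1 / (m:ℝ)) * Real.exp (-(s + k) * m * ℓ i)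
      rw [← Real.exp_nat_mul, mul_assoc, ← Real.exp_add]
      congr 2
      ring
    have key : Real.exp (s * m * ℓ i) - Real.exp ((s - 1) * m * ℓ i)
        = Real.exp (s * m * ℓ i) * (1 - Real.exp (-((m:ℝ) * ℓ i))) := by
      rw [mul_sub, mul_one, ← Real.exp_add]
      congr 2
      ring
    have h2 : (1 / (m:ℝ)) * Real.exp (-(s * m * ℓ i)) * (1 - Real.exp (-((m:ℝ) * ℓ i)))⁻¹
        = (1 / (m:ℝ)) * (Real.exp (s * m * ℓ i) - Real.exp ((s - 1) * m * ℓ i))⁻¹ := by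
      rw [key, mul_inv, Real.exp_neg]
      ring
    rw [h1, h2] at geom
    exact geom
  -- log series over m
  have hC : ∀ i (k : ℕ), HasSum (fun m : ℕ+ => a (i, m, k))
      (-Real.log (1 - Real.exp (-(s + k) * ℓ i))) := by
    intro i k
    set x := Real.exp (-(s + k) * ℓ i) with hx_def
    have hxpos : 0 < x := Real.exp_pos _
    have hsk : 0 < s + (k:ℝ) := by positivity
    have hx1 : x < 1 := Real.exp_lt_one_iff.mpr (by nlinarith [hℓpos i])
    have habs : |x| < 1 := by rw [abs_of_pos hxpos]; exact hx1
    have H := hasSum_pow_div_log_of_abs_lt_one habs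
    have H2 := (Equiv.pnatEquivNat.hasSum_iff).mpr H
    convert H2 using 1
    funext m
    have hxm : x ^ (m : ℕ) = Real.exp (-(s + k) * m * ℓ i) := by
      rw [hx_def, ← Real.exp_nat_mul]
      congr 1
      ring
    show (1 / (m:ℝ)) * Real.exp (-(s + k) * m * ℓ i)
        = x ^ (m.natPred + 1) / (((m.natPred : ℕ) : ℝ) + 1)
    have hden : ((m.natPred : ℕ) : ℝ) + 1 = ((m : ℕ) : ℝ) := by
      exact_mod_cast m.natPred_add_one
    rw [m.natPred_add_one, hxm, hden]
    ring
  -- reassociate summability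
  have ha1 : Summable (fun q : (ι × ℕ+) × ℕ => a (q.1.1, q.1.2, q.2)) := by
    exact ha.comp_injective (Equiv.prodAssoc ι ℕ+ ℕ).injective
  have ha2 : Summable (fun q : (ι × ℕ) × ℕ+ => a (q.1.1, q.2, q.1.2)) := by
    exact ha.comp_injective
      ((Equiv.prodAssoc ι ℕ ℕ+).trans ((Equiv.refl ι).prodCongr (Equiv.prodComm ℕ ℕ+))).injective
  -- sums
  set S : ℝ := ∑' p : ι × ℕ+ × ℕ, a p with hS_def
  have hS1 : ∑' q : (ι × ℕ+) × ℕ, a (q.1.1, q.1.2, q.2) = S := by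
    exact (Equiv.prodAssoc ι ℕ+ ℕ).tsum_eq a
  have hS2 : ∑' q : (ι × ℕ) × ℕ+, a (q.1.1, q.2, q.1.2) = S := by
    exact ((Equiv.prodAssoc ι ℕ ℕ+).trans
      ((Equiv.refl ι).prodCongr (Equiv.prodComm ℕ ℕ+))).tsum_eq a
  have hLHS : HasSum (fun p : ι × ℕ+ =>
      (1 / (p.2 : ℝ)) * (Real.exp (s * p.2 * ℓ p.1) - Real.exp ((s - 1) * p.2 * ℓ p.1))⁻¹) S := by
    rw [← hS1]
    exact ha1.hasSum.prod_fiberwise (fun p => hB p.1 p.2)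
  have hRHS : HasSum (fun p : ι × ℕ =>
      -Real.log (1 - Real.exp (-(s + p.2) * ℓ p.1))) S := by
    rw [← hS2]
    exact ha2.hasSum.prod_fiberwise (fun p => hC p.1 p.2)
  refine ⟨hLHS.summable, ?_⟩
  -- the product
  have hsumL : Summable (fun p : ι × ℕ =>
      -Real.log (1 - Real.exp (-(s + p.2) * ℓ p.1))) := hRHS.summable
  set g : ι → ℝ := fun i => ∑' k : ℕ, -Real.log (1 - Real.exp (-(s + k) * ℓ i)) with hg_def
  have hgS : HasSum g S := hRHS.prod_fiberwise (fun i => (hsumL.prod_factor i).hasSum)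
  have hinner : ∀ i, (∏' k : ℕ, (1 - Real.exp (-(s + k) * ℓ i))) = Real.exp (-(g i)) := by
    intro i
    have h := (((hsumL.prod_factor i).hasSum).neg).exp (𝔸 := ℝ)
    rw [← Real.exp_eq_exp_ℝ] at h
    have h' : HasProd (fun k : ℕ =>
        Real.exp (-(-Real.log (1 - Real.exp (-(s + k) * ℓ i))))) (Real.exp (-(g i))) := h
    have hfun : (fun k : ℕ => Real.exp (-(-Real.log (1 - Real.exp (-(s + k) * ℓ i)))))
        = fun k : ℕ => 1 - Real.exp (-(s + k) * ℓ i) := by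
      funext k
      rw [neg_neg, Real.exp_log]
      have hsk : 0 < s + (k:ℝ) := by positivity
      have hlt : Real.exp (-(s + k) * ℓ i) < 1 :=
        Real.exp_lt_one_iff.mpr (by nlinarith [hℓpos i])
      linarith
    rw [hfun] at h'
    exact h'.tprod_eq
  have houter : (∏' i, Real.exp (-(g i))) = Real.exp (-S) := by
    have h := (hgS.neg).exp (𝔸 := ℝ)
    rw [← Real.exp_eq_exp_ℝ] at h
    have h' : HasProd (fun i => Real.exp (-(g i))) (Real.exp (-S)) := h
    exact h'.tprod_eq
  have hprodEq : (∏' i, ∏' k : ℕ, (1 - Real.exp (-(s + k) * ℓ i))) = Real.exp (-S) :=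
    (tprod_congr hinner).trans houter
  have hsumEq : (∑' i, ∑' m : ℕ+,
      (1 / (m : ℝ)) * (Real.exp (s * m * ℓ i) - Real.exp ((s - 1) * m * ℓ i))⁻¹) = S := by
    exact (Summable.tsum_prod' hLHS.summable
      (fun i => hLHS.summable.prod_factor i)).symm.trans hLHS.tsum_eq
  rw [hsumEq, hprodEq, Real.log_exp, neg_neg]
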